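/- Let L be a positive semi-definite matrix indexed by a finite set Y defining the L-ensemble DPP P_L(Y') ∝ det(L_{Y'}), and let A^in, A^out ⊆ Y be disjoint. Then the conditional kernel satisfying P_L(Y' = A^in ∪ B | A^in ⊆ Y', A^out ∩ Y' = ∅) ∝ det(K_B) for B ⊆ Y \ (A^in ∪ A^out) is given by K = ([(L_{complement of A^out} + I_{complement of A^in})^{-1}]_{complement of A^in})^{-1} − I, where I_{S} denotes the matrix that is the identity on indices in S and zero elsewhere, provided the relevant inverses exist. -/

import Mathlib

open Matrix

/-- Principal/rectangular submatrix of `L` with rows indexed by `A` and columns by `B`. -/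
def subm {N : ℕ} (L : Matrix (Fin N) (Fin N) ℝ) (A B : Finset (Fin N)) :
    Matrix A B ℝ := Matrix.of fun i j => L i.1 j.1

/-- Principal submatrix of a matrix indexed by `A`, restricted to `B ⊆ A`. -/
def subm2 {N : ℕ} {A B : Finset (Fin N)} (M : Matrix A A ℝ) (h : B ⊆ A) :
    Matrix B B ℝ := Matrix.of fun i j => M ⟨i.1, h i.2⟩ ⟨j.1, h j.2⟩

/-- The complement of `Aout`, i.e. `\bar{A}^{out}`. -/
def cAc {N : ℕ} (Aout : Finset (Fin N)) : Finset (Fin N) := Finset.univ \ Aout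

/-- The remaining ground set `T = Y ∖ (A^{in} ∪ A^{out})`. -/
def cT {N : ℕ} (Ain Aout : Finset (Fin N)) : Finset (Fin N) :=
  Finset.univ \ (Ain ∪ Aout)

theorem cT_subset_cAc {N : ℕ} (Ain Aout : Finset (Fin N)) : cT Ain Aout ⊆ cAc Aout :=
  Finset.sdiff_subset_sdiff (Finset.Subset.refl _) Finset.subset_union_right

/-- `L_{\bar{A}^{out}} + I_{\bar{A}^{in}}`, where `I_{\bar{A}^{in}}` is the identity on
indices outside `A^{in}` and zero elsewhere. -/
def dppCondM {N : ℕ} (L : Matrix (Fin N) (Fin N) ℝ) (Ain Aout : Finset (Fin N)) :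
    Matrix (cAc Aout) (cAc Aout) ℝ :=
  subm L (cAc Aout) (cAc Aout)
    + Matrix.of fun i j => if i = j ∧ i.1 ∉ Ain then (1 : ℝ) else 0

/-- The conditional DPP kernel `K = ([(L_{\bar{A}^{out}} + I_{\bar{A}^{in}})⁻¹]_{\bar{A}^{in}})⁻¹ − I`. -/
noncomputable def dppCondK {N : ℕ} (L : Matrix (Fin N) (Fin N) ℝ) (Ain Aout : Finset (Fin N)) :
    Matrix (cT Ain Aout) (cT Ain Aout) ℝ :=
  (subm2 ((dppCondM L Ain Aout)⁻¹) (cT_subset_cAc Ain Aout))⁻¹ - 1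


namespace DPPAux

def padM (X : Matrix (Fin N) (Fin N) ℝ) (W : Finset (Fin N)) : Matrix (Fin N) (Fin N) ℝ :=
  Matrix.of fun i j => if i ∈ W ∧ j ∈ W then X i j else if i = j then (1 : ℝ) else 0

def replM (X : Matrix (Fin N) (Fin N) ℝ) (C : Finset (Fin N)) : Matrix (Fin N) (Fin N) ℝ :=
  Matrix.of fun i j => if i ∈ C then (if i = j then (1 : ℝ) else 0) else X i j

def eMask (S : Finset (Fin N)) : Matrix (Fin N) (Fin N) ℝ :=
  Matrix.of fun i j => if i = j ∧ i ∈ S then (1 : ℝ) else 0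

lemma det_padM (X : Matrix (Fin N) (Fin N) ℝ) (W : Finset (Fin N)) :
    (padM X W).det = (subm X W W).det := by
  classical
  let e : {x : Fin N // x ∈ W} ⊕ {x : Fin N // ¬ x ∈ W} ≃ Fin N := Equiv.sumCompl _
  rw [← Matrix.det_submatrix_equiv_self e (padM X W)]
  have he : (padM X W).submatrix e e
      = Matrix.fromBlocks (subm X W W) 0 0
          (1 : Matrix {x : Fin N // ¬ x ∈ W} {x : Fin N // ¬ x ∈ W} ℝ) := by
    ext i j
    rcases i with ⟨i, hi⟩ | ⟨i, hi⟩ <;> rcases j with ⟨j, hj⟩ | ⟨j, hj⟩ <;>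
      simp only [Matrix.submatrix_apply, e, Equiv.sumCompl_apply_inl, Equiv.sumCompl_apply_inr,
        padM, subm, Matrix.of_apply, Matrix.fromBlocks_apply₁₁, Matrix.fromBlocks_apply₁₂,
        Matrix.fromBlocks_apply₂₁, Matrix.fromBlocks_apply₂₂, Matrix.zero_apply,
        Matrix.one_apply, Subtype.mk.injEq]
    · exact if_pos ⟨hi, hj⟩
    · rw [if_neg (fun h => hj h.2), if_neg]; rintro rfl; exact hj hi
    · rw [if_neg (fun h => hi h.1), if_neg]; rintro rfl; exact hi hj
    · rw [if_neg (fun h => hi h.1)]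
  rw [he, Matrix.det_fromBlocks_zero₂₁, Matrix.det_one, mul_one]

lemma det_replM (X : Matrix (Fin N) (Fin N) ℝ) (C : Finset (Fin N)) :
    (replM X C).det = (padM X (Finset.univ \ C)).det := by
  classical
  let e : {x : Fin N // x ∈ C} ⊕ {x : Fin N // ¬ x ∈ C} ≃ Fin N := Equiv.sumCompl _
  rw [← Matrix.det_submatrix_equiv_self e (replM X C),
    ← Matrix.det_submatrix_equiv_self e (padM X (Finset.univ \ C))]
  have h1 : (replM X C).submatrix e e
      = Matrix.fromBlocks 1 0 (Matrix.of fun i j => X i.1 j.1)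
          (Matrix.of fun i j => X i.1 j.1) := by
    ext i j
    rcases i with ⟨i, hi⟩ | ⟨i, hi⟩ <;> rcases j with ⟨j, hj⟩ | ⟨j, hj⟩ <;>
      simp only [Matrix.submatrix_apply, e, Equiv.sumCompl_apply_inl, Equiv.sumCompl_apply_inr,
        replM, Matrix.of_apply, Matrix.fromBlocks_apply₁₁, Matrix.fromBlocks_apply₁₂,
        Matrix.fromBlocks_apply₂₁, Matrix.fromBlocks_apply₂₂, Matrix.zero_apply,
        Matrix.one_apply, Subtype.mk.injEq]
    · rw [if_pos hi]
    · rw [if_pos hi, if_neg]; rintro rfl; exact hj hi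
    · rw [if_neg hi]
    · rw [if_neg hi]
  have h2 : (padM X (Finset.univ \ C)).submatrix e e
      = Matrix.fromBlocks 1 0 0 (Matrix.of fun i j => X i.1 j.1) := by
    ext i j
    rcases i with ⟨i, hi⟩ | ⟨i, hi⟩ <;> rcases j with ⟨j, hj⟩ | ⟨j, hj⟩ <;>
      simp only [Matrix.submatrix_apply, e, Equiv.sumCompl_apply_inl, Equiv.sumCompl_apply_inr,
        padM, Matrix.of_apply, Matrix.fromBlocks_apply₁₁, Matrix.fromBlocks_apply₁₂,
        Matrix.fromBlocks_apply₂₁, Matrix.fromBlocks_apply₂₂, Matrix.zero_apply,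
        Matrix.one_apply, Subtype.mk.injEq, Finset.mem_sdiff, Finset.mem_univ, true_and]
    · rw [if_neg (fun h => h.1 hi)]
    · rw [if_neg (fun h => h.1 hi), if_neg]; rintro rfl; exact hj hi
    · rw [if_neg (fun h => h.2 hj), if_neg]; rintro rfl; exact hi hj
    · rw [if_pos ⟨hi, hj⟩]
  rw [h1, h2, Matrix.det_fromBlocks_zero₁₂, Matrix.det_fromBlocks_zero₁₂]

lemma padM_padM (X : Matrix (Fin N) (Fin N) ℝ) (W C : Finset (Fin N)) :
    padM (padM X W) (Finset.univ \ C) = padM X (W \ C) := by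
  classical
  ext i j
  simp only [padM, Matrix.of_apply, Finset.mem_sdiff, Finset.mem_univ, true_and]
  by_cases hi : i ∈ W <;> by_cases hj : j ∈ W <;> by_cases hic : i ∈ C <;>
    by_cases hjc : j ∈ C <;> simp [hi, hj, hic, hjc]

lemma det_add_eMask (S : Finset (Fin N)) :
    ∀ X : Matrix (Fin N) (Fin N) ℝ,
      (X + eMask S).det = ∑ C ∈ S.powerset, (replM X C).det := by
  classical
  induction S using Finset.induction_on with
  | empty =>
      intro X
      have h0 : eMask (∅ : Finset (Fin N)) = 0 := by
        ext i j; simp [eMask]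
      have h1 : replM X (∅ : Finset (Fin N)) = X := by
        ext i j; simp [replM]
      simp [h0, h1]
  | insert a S ha ih =>
      intro X
      have hrow : X + eMask (insert a S)
          = Matrix.updateRow (X + eMask S) a ((X + eMask S) a + Pi.single a 1) := by
        ext i j
        by_cases hi : i = a
        · subst hi
          simp only [Matrix.updateRow_self, Pi.add_apply, Matrix.add_apply, eMask,
            Matrix.of_apply, Pi.single_apply]
          by_cases hij : i = j
          · subst hij; simp [ha]
          · have hc1 : ¬(i = j ∧ i ∈ insert i S) := fun h => hij h.1
            have hc2 : ¬(i = j ∧ i ∈ S) := fun h => hij h.1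
            rw [if_neg hc1, if_neg hc2, if_neg (fun h : j = i => hij h.symm)]
            ring
        · simp only [Matrix.updateRow_ne hi, Matrix.add_apply, eMask, Matrix.of_apply]
          congr 1
          by_cases hij : i = j
          · subst hij; simp [Finset.mem_insert, hi]
          · simp [hij]
      rw [hrow, Matrix.det_updateRow_add, Matrix.updateRow_eq_self]
      have h2 : Matrix.updateRow (X + eMask S) a (Pi.single a 1)
          = Matrix.updateRow X a (Pi.single a 1) + eMask S := by
        ext i j
        by_cases hi : i = a
        · subst hi
          simp only [Matrix.updateRow_self, Matrix.add_apply, eMask, Matrix.of_apply]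
          rw [if_neg (fun h => ha h.2), add_zero]
        · simp [Matrix.updateRow_ne hi]
      rw [h2, ih, ih]
      rw [Finset.powerset_insert, Finset.sum_union, Finset.sum_image]
      · congr 1
        refine Finset.sum_congr rfl fun C hC => ?_
        have haC : a ∉ C := fun h => ha (Finset.mem_powerset.mp hC h)
        congr 1
        ext i j
        simp only [replM, Matrix.of_apply, Finset.mem_insert]
        by_cases hi : i = a
        · subst hi
          simp only [haC, or_false, if_neg haC, Matrix.updateRow_self, Pi.single_apply,
            true_or, if_pos (Or.inl rfl), eq_self_iff_true]
          by_cases hij : i = j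
          · simp [hij]
          · rw [if_neg (fun h : j = i => hij h.symm), if_neg hij]
            simp
        · by_cases hiC : i ∈ C <;> simp [hi, hiC, Matrix.updateRow_ne hi]
      · intro x hx y hy hxy
        have hax : a ∉ x := fun h => ha (Finset.mem_powerset.mp hx h)
        have hay : a ∉ y := fun h => ha (Finset.mem_powerset.mp hy h)
        have := congrArg (Finset.erase · a) hxy
        simpa [Finset.erase_insert, hax, hay] using this
      · rw [Finset.disjoint_right]
        rintro t ht hts
        obtain ⟨u, hu, rfl⟩ := Finset.mem_image.mp ht
        exact ha (Finset.mem_powerset.mp hts (Finset.mem_insert_self a u))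

/-- Equiv between a disjoint union of finsets and their union. -/
def unionSumEquiv {N : ℕ} (P Q : Finset (Fin N)) (h : Disjoint P Q) :
    (P : Finset (Fin N)) ⊕ (Q : Finset (Fin N)) ≃ ((P ∪ Q : Finset (Fin N)) : Finset (Fin N)) where
  toFun := Sum.elim (fun p => ⟨p.1, Finset.mem_union_left _ p.2⟩)
    (fun q => ⟨q.1, Finset.mem_union_right _ q.2⟩)
  invFun x := if hx : x.1 ∈ P then Sum.inl ⟨x.1, hx⟩
    else Sum.inr ⟨x.1, (Finset.mem_union.mp x.2).resolve_left hx⟩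
  left_inv := by
    rintro (p | q)
    · simp
    · have : q.1 ∉ P := Finset.disjoint_right.mp h q.2
      simp [this]
  right_inv := by
    intro x
    by_cases hx : x.1 ∈ P <;> simp [hx]

lemma unionSumEquiv_inl {N : ℕ} (P Q : Finset (Fin N)) (h : Disjoint P Q) (p : P) :
    ((unionSumEquiv P Q h (Sum.inl p)) : Fin N) = p.1 := rfl

lemma unionSumEquiv_inr {N : ℕ} (P Q : Finset (Fin N)) (h : Disjoint P Q) (q : Q) :
    ((unionSumEquiv P Q h (Sum.inr q)) : Fin N) = q.1 := rfl

/-- Block determinant formula for principal minors on a disjoint union. -/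
lemma det_subm_union {N : ℕ} (L : Matrix (Fin N) (Fin N) ℝ) (P Q : Finset (Fin N))
    (h : Disjoint P Q) (hA : IsUnit (subm L P P).det) :
    (subm L (P ∪ Q) (P ∪ Q)).det
      = (subm L P P).det
        * (subm L Q Q - subm L Q P * (subm L P P)⁻¹ * subm L P Q).det := by
  classical
  have := Matrix.invertibleOfIsUnitDet _ hA
  let e := unionSumEquiv P Q h
  rw [← Matrix.det_submatrix_equiv_self e (subm L (P ∪ Q) (P ∪ Q))]
  have he : (subm L (P ∪ Q) (P ∪ Q)).submatrix e e
      = Matrix.fromBlocks (subm L P P) (subm L P Q) (subm L Q P) (subm L Q Q) := by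
    ext i j
    rcases i with i | i <;> rcases j with j | j <;> rfl
  rw [he, Matrix.det_fromBlocks₁₁, Matrix.invOf_eq_nonsing_inv]

lemma sum_det_eq {N : ℕ} (L : Matrix (Fin N) (Fin N) ℝ) (Ain Aout : Finset (Fin N))
    (hdisj : Disjoint Ain Aout) :
    (dppCondM L Ain Aout).det
      = ∑ B' ∈ (cT Ain Aout).powerset, (subm L (Ain ∪ B') (Ain ∪ B')).det := by
  classical
  have hpad : padM L (cAc Aout) + eMask (cT Ain Aout)
      = padM (L + eMask (cT Ain Aout)) (cAc Aout) := by
    ext i j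
    simp only [padM, eMask, Matrix.add_apply, Matrix.of_apply]
    by_cases hij : i ∈ cAc Aout ∧ j ∈ cAc Aout
    · rw [if_pos hij, if_pos hij]
    · rw [if_neg hij, if_neg hij]
      have hni : ¬ (i = j ∧ i ∈ cT Ain Aout) := by
        rintro ⟨rfl, hi⟩
        exact hij ⟨cT_subset_cAc _ _ hi, cT_subset_cAc _ _ hi⟩
      rw [if_neg hni, add_zero]
  have hsubm : subm (L + eMask (cT Ain Aout)) (cAc Aout) (cAc Aout) = dppCondM L Ain Aout := by
    ext i j
    simp only [subm, dppCondM, eMask, Matrix.add_apply, Matrix.of_apply]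
    congr 1
    by_cases hij : i = j
    · subst hij
      have hio : (i : Fin N) ∉ Aout := (Finset.mem_sdiff.mp i.2).2
      by_cases hi : (i : Fin N) ∈ Ain
      · rw [if_neg (fun h => (Finset.mem_sdiff.mp h.2).2 (Finset.mem_union_left _ hi)),
          if_neg (fun h => h.2 hi)]
      · rw [if_pos ⟨rfl, Finset.mem_sdiff.mpr ⟨Finset.mem_univ _,
            fun hc => (Finset.mem_union.mp hc).elim hi hio⟩⟩, if_pos ⟨rfl, hi⟩]
    · rw [if_neg (fun h => hij (Subtype.ext h.1)), if_neg (fun h => hij h.1)]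
  have step1 : (padM L (cAc Aout) + eMask (cT Ain Aout)).det = (dppCondM L Ain Aout).det := by
    rw [hpad, det_padM, hsubm]
  rw [← step1, det_add_eMask]
  refine Finset.sum_nbij' (fun C => cT Ain Aout \ C) (fun B' => cT Ain Aout \ B')
    (fun C hC => Finset.mem_powerset.mpr (Finset.sdiff_subset))
    (fun B' hB' => Finset.mem_powerset.mpr (Finset.sdiff_subset))
    (fun C hC => Finset.sdiff_sdiff_eq_self (Finset.mem_powerset.mp hC))
    (fun B' hB' => Finset.sdiff_sdiff_eq_self (Finset.mem_powerset.mp hB'))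
    (fun C hC => ?_)
  have hC' : C ⊆ cT Ain Aout := Finset.mem_powerset.mp hC
  have hset : cAc Aout \ C = Ain ∪ (cT Ain Aout \ C) := by
    ext x
    constructor
    · intro hx
      obtain ⟨hx1, hx2⟩ := Finset.mem_sdiff.mp hx
      have hxo : x ∉ Aout := (Finset.mem_sdiff.mp hx1).2
      by_cases hxa : x ∈ Ain
      · exact Finset.mem_union_left _ hxa
      · exact Finset.mem_union_right _ (Finset.mem_sdiff.mpr
          ⟨Finset.mem_sdiff.mpr ⟨Finset.mem_univ _,
            fun hc => (Finset.mem_union.mp hc).elim hxa hxo⟩, hx2⟩)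
    · intro hx
      rcases Finset.mem_union.mp hx with hxa | hxt
      · refine Finset.mem_sdiff.mpr ⟨Finset.mem_sdiff.mpr
          ⟨Finset.mem_univ _, Finset.disjoint_left.mp hdisj hxa⟩, fun hc => ?_⟩
        exact (Finset.mem_sdiff.mp (hC' hc)).2 (Finset.mem_union_left _ hxa)
      · obtain ⟨hxt', hxc⟩ := Finset.mem_sdiff.mp hxt
        have hxn := (Finset.mem_sdiff.mp hxt').2
        exact Finset.mem_sdiff.mpr ⟨Finset.mem_sdiff.mpr ⟨Finset.mem_univ _,
          fun h => hxn (Finset.mem_union_right _ h)⟩, hxc⟩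
  rw [det_replM, padM_padM, det_padM, hset]

theorem stmt8' {N : ℕ} (L : Matrix (Fin N) (Fin N) ℝ)
    (Ain Aout : Finset (Fin N)) (hdisj : Disjoint Ain Aout)
    (hinv1 : IsUnit (dppCondM L Ain Aout).det)
    (hinv2 : IsUnit (subm2 ((dppCondM L Ain Aout)⁻¹) (cT_subset_cAc Ain Aout)).det) :
    ∀ B : Finset (Fin N), ∀ hB : B ⊆ cT Ain Aout,
      (subm L (Ain ∪ B) (Ain ∪ B)).det * (dppCondK L Ain Aout + 1).det
        = (∑ B' ∈ (cT Ain Aout).powerset, (subm L (Ain ∪ B') (Ain ∪ B')).det)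
            * (subm2 (dppCondK L Ain Aout) hB).det := by
  classical
  intro B hB
  have hdisj2 : Disjoint Ain (cT Ain Aout) := Finset.disjoint_left.mpr
    (fun {x} hxa hxt => (Finset.mem_sdiff.mp hxt).2 (Finset.mem_union_left _ hxa))
  have hAcT : Ain ∪ cT Ain Aout = cAc Aout := by
    ext x
    constructor
    · intro hx
      rcases Finset.mem_union.mp hx with hxa | hxt
      · exact Finset.mem_sdiff.mpr ⟨Finset.mem_univ _, Finset.disjoint_left.mp hdisj hxa⟩
      · exact cT_subset_cAc _ _ hxt
    · intro hx
      have hxo := (Finset.mem_sdiff.mp hx).2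
      by_cases hxa : x ∈ Ain
      · exact Finset.mem_union_left _ hxa
      · exact Finset.mem_union_right _ (Finset.mem_sdiff.mpr ⟨Finset.mem_univ _,
          fun hc => (Finset.mem_union.mp hc).elim hxa hxo⟩)
  let e1 : ((Ain : Finset (Fin N)) : Type) ⊕ ((cT Ain Aout : Finset (Fin N)) : Type)
      ≃ ((cAc Aout : Finset (Fin N)) : Type) :=
    (unionSumEquiv Ain (cT Ain Aout) hdisj2).trans
      (Equiv.subtypeEquivRight (fun x => by rw [hAcT]))
  set A := subm L Ain Ain with hA
  set Bm := subm L Ain (cT Ain Aout) with hBm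
  set Cm := subm L (cT Ain Aout) Ain with hCm
  set D := subm L (cT Ain Aout) (cT Ain Aout) with hD
  have hM' : (dppCondM L Ain Aout).submatrix e1 e1 = Matrix.fromBlocks A Bm Cm (D + 1) := by
    ext i j
    rcases i with i | i <;> rcases j with j | j <;>
      simp only [Matrix.submatrix_apply, dppCondM, Matrix.add_apply, subm, Matrix.of_apply,
        Matrix.fromBlocks_apply₁₁, Matrix.fromBlocks_apply₁₂, Matrix.fromBlocks_apply₂₁,
        Matrix.fromBlocks_apply₂₂, Matrix.one_apply]
    · rw [if_neg (fun h => h.2 i.2), add_zero]; rfl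
    · rw [if_neg (fun h => Sum.inl_ne_inr (e1.injective h.1)), add_zero]; rfl
    · rw [if_neg (fun h => Sum.inl_ne_inr (e1.injective h.1).symm), add_zero]; rfl
    · have hni : ((e1 (Sum.inr i)) : Fin N) ∉ Ain :=
        fun h => (Finset.mem_sdiff.mp i.2).2 (Finset.mem_union_left _ h)
      by_cases hij : i = j
      · subst hij
        rw [if_pos ⟨rfl, hni⟩, if_pos rfl]
        rfl
      · rw [if_neg (fun h => hij (Sum.inr_injective (e1.injective h.1))), if_neg hij]
        rfl
  have hdetM' : ((dppCondM L Ain Aout).submatrix e1 e1).det = (dppCondM L Ain Aout).det :=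
    Matrix.det_submatrix_equiv_self e1 _
  have hMul1 : (dppCondM L Ain Aout).submatrix e1 e1
      * ((dppCondM L Ain Aout)⁻¹).submatrix e1 e1 = 1 := by
    rw [Matrix.submatrix_mul_equiv, Matrix.mul_nonsing_inv _ hinv1, Matrix.submatrix_one_equiv]
  have hMul2 : ((dppCondM L Ain Aout)⁻¹).submatrix e1 e1
      * (dppCondM L Ain Aout).submatrix e1 e1 = 1 := by
    rw [Matrix.submatrix_mul_equiv, Matrix.nonsing_inv_mul _ hinv1, Matrix.submatrix_one_equiv]
  set P := (((dppCondM L Ain Aout)⁻¹).submatrix e1 e1).toBlocks₁₁ with hP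
  set Q := (((dppCondM L Ain Aout)⁻¹).submatrix e1 e1).toBlocks₁₂ with hQ
  set R := (((dppCondM L Ain Aout)⁻¹).submatrix e1 e1).toBlocks₂₁ with hR
  set S' := (((dppCondM L Ain Aout)⁻¹).submatrix e1 e1).toBlocks₂₂ with hS'def
  have hblocks : ((dppCondM L Ain Aout)⁻¹).submatrix e1 e1 = Matrix.fromBlocks P Q R S' :=
    (Matrix.fromBlocks_toBlocks _).symm
  have hS' : S' = subm2 ((dppCondM L Ain Aout)⁻¹) (cT_subset_cAc Ain Aout) := by
    ext i j; rfl
  rw [hM', hblocks, ← Matrix.fromBlocks_one, Matrix.fromBlocks_multiply] at hMul1 hMul2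
  obtain ⟨e11, e12, e21, e22⟩ := Matrix.fromBlocks_inj.mp hMul1
  obtain ⟨f11, f12, f21, f22⟩ := Matrix.fromBlocks_inj.mp hMul2
  have hdM : (Matrix.fromBlocks A Bm Cm (D + 1)).det = (dppCondM L Ain Aout).det := by
    rw [← hM', hdetM']
  have hAdet : A.det = (dppCondM L Ain Aout).det * S'.det := by
    have hprod : Matrix.fromBlocks A Bm Cm (D + 1) * Matrix.fromBlocks 1 Q 0 S'
        = Matrix.fromBlocks A 0 Cm 1 := by
      rw [Matrix.fromBlocks_multiply, Matrix.mul_one, Matrix.mul_zero, add_zero, Matrix.mul_one,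
        Matrix.mul_zero, add_zero, e12, e22]
    have hdet := congrArg Matrix.det hprod
    rw [Matrix.det_mul, Matrix.det_fromBlocks_zero₂₁, Matrix.det_fromBlocks_zero₁₂,
      Matrix.det_one, Matrix.det_one, one_mul, mul_one, hdM] at hdet
    exact hdet.symm
  have hS'unit : IsUnit S'.det := by rw [hS']; exact hinv2
  have hAunit : IsUnit A.det := by rw [hAdet]; exact hinv1.mul hS'unit
  haveI := Matrix.invertibleOfIsUnitDet A hAunit
  have hSC : S' * Cm = -(R * A) := eq_neg_of_add_eq_zero_right f21
  have key : S' * (Cm * A⁻¹ * Bm) = -(R * Bm) := by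
    have h1 : S' * (Cm * A⁻¹ * Bm) = (S' * Cm) * (A⁻¹ * Bm) := by
      simp only [Matrix.mul_assoc]
    rw [h1, hSC, Matrix.neg_mul, Matrix.mul_assoc, Matrix.mul_nonsing_inv_cancel_left _ _ hAunit]
  have hSchur1 : S' * ((D + 1) - Cm * A⁻¹ * Bm) = 1 := by
    rw [Matrix.mul_sub, key, sub_neg_eq_add, add_comm, f22]
  have hSinv : (subm2 ((dppCondM L Ain Aout)⁻¹) (cT_subset_cAc Ain Aout))⁻¹
      = (D + 1) - Cm * A⁻¹ * Bm := by
    rw [← hS']; exact Matrix.inv_eq_right_inv hSchur1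
  have hK1 : dppCondK L Ain Aout + 1 = (D + 1) - Cm * A⁻¹ * Bm := by
    rw [dppCondK, hSinv]; abel
  have detM : (dppCondM L Ain Aout).det = A.det * ((D + 1) - Cm * A⁻¹ * Bm).det := by
    rw [← hdM, Matrix.det_fromBlocks₁₁, Matrix.invOf_eq_nonsing_inv]
  have hd3 : Disjoint Ain B := Finset.disjoint_left.mpr
    (fun {x} hxa hxb => Finset.disjoint_left.mp hdisj2 hxa (hB hxb))
  have subm2K : subm2 (dppCondK L Ain Aout) hB
      = subm L B B - subm L B Ain * A⁻¹ * subm L Ain B := by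
    have hK : dppCondK L Ain Aout = D - Cm * A⁻¹ * Bm := by
      rw [dppCondK, hSinv]; abel
    rw [hK]
    ext i j
    rfl
  have hLB : (subm L (Ain ∪ B) (Ain ∪ B)).det
      = A.det * (subm2 (dppCondK L Ain Aout) hB).det := by
    rw [det_subm_union L Ain B hd3 hAunit, subm2K]
  rw [hK1, hLB, ← sum_det_eq L Ain Aout hdisj, detM]
  ring

end DPPAux

/-- For an L-ensemble DPP with PSD kernel `L` and disjoint `A^{in}, A^{out}`,
the conditional probabilities are proportional to `det(K_B)`: for every `B ⊆ T`,
`det(L_{A^{in} ∪ B}) · det(K + I) = (∑_{B' ⊆ T} det(L_{A^{in} ∪ B'})) · det(K_B)`,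
provided the relevant inverses exist. -/
theorem stmt8 {N : ℕ} (L : Matrix (Fin N) (Fin N) ℝ) (hL : L.PosSemidef)
    (Ain Aout : Finset (Fin N)) (hdisj : Disjoint Ain Aout)
    (hinv1 : IsUnit (dppCondM L Ain Aout).det)
    (hinv2 : IsUnit (subm2 ((dppCondM L Ain Aout)⁻¹) (cT_subset_cAc Ain Aout)).det) :
    ∀ B : Finset (Fin N), ∀ hB : B ⊆ cT Ain Aout,
      (subm L (Ain ∪ B) (Ain ∪ B)).det * (dppCondK L Ain Aout + 1).det
        = (∑ B' ∈ (cT Ain Aout).powerset, (subm L (Ain ∪ B') (Ain ∪ B')).det)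
            * (subm2 (dppCondK L Ain Aout) hB).det := by
  intro B hB
  exact DPPAux.stmt8' L Ain Aout hdisj hinv1 hinv2 B hB
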